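/- Let X_1, ..., X_n be (possibly dependent) standard Cauchy random variables, and let γ_1, ..., γ_n > 0 with γ = Σ γ_i. Then for any t ≥ 1 and n ≥ 3, Pr[Σ_{i=1}^n γ_i |X_i| > γ t] ≤ 2 log(n t) / t. -/

import Mathlib

open MeasureTheory ProbabilityTheory Finset Real Set
open scoped ENNReal NNReal

lemma aux_rpow_eq {c : ℝ} (hc : 0 < c) : ∀ x ∈ Ioi c, x ^ (-2 : ℝ) = 1 / x ^ 2 := by
  intro x hx
  rw [Real.rpow_neg (le_of_lt (hc.trans hx)), one_div]
  norm_cast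

lemma aux_integrableOn_inv_sq {c : ℝ} (hc : 0 < c) :
    IntegrableOn (fun x : ℝ => 1 / x ^ 2) (Ioi c) :=
  (integrableOn_Ioi_rpow_of_lt (a := -2) (by norm_num) hc).congr_fun
    (aux_rpow_eq hc) measurableSet_Ioi

lemma aux_integral_inv_sq {c : ℝ} (hc : 0 < c) :
    ∫ x in Ioi c, 1 / x ^ 2 = 1 / c := by
  have h := integral_Ioi_rpow_of_lt (a := -2) (by norm_num) hc
  rw [setIntegral_congr_fun measurableSet_Ioi (fun x hx => (aux_rpow_eq hc x hx).symm), h]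
  rw [show (-2 : ℝ) + 1 = -1 by norm_num, Real.rpow_neg_one]
  field_simp

lemma aux_int_log {M : ℝ} :
    ∫ x in (0:ℝ)..M, x / (1 + x ^ 2) = Real.log (1 + M ^ 2) / 2 := by
  have hder : ∀ x ∈ uIcc (0:ℝ) M, HasDerivAt (fun y => Real.log (1 + y ^ 2) / 2)
      (x / (1 + x ^ 2)) x := by
    intro x _
    have h1 : HasDerivAt (fun y : ℝ => 1 + y ^ 2) (2 * x) x := by
      simpa using (hasDerivAt_pow 2 x).const_add 1
    have hne : (1 : ℝ) + x ^ 2 ≠ 0 := by positivity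
    have := (h1.log hne).div_const 2
    exact this.congr_deriv (by ring)
  have hcont : IntervalIntegrable (fun x : ℝ => x / (1 + x ^ 2)) volume 0 M := by
    apply Continuous.intervalIntegrable
    exact continuous_id.div (by continuity) (fun x => by positivity)
  have := intervalIntegral.integral_eq_sub_of_hasDerivAt hder hcont
  simp at this
  simp [this]

lemma aux_lintegral_Iio_neg (M : ℝ) (g : ℝ → ℝ≥0∞) (hg : Measurable g) :
    ∫⁻ x in Iio (-M), g x = ∫⁻ x in Ioi M, g (-x) := by
  have hpre : Neg.neg ⁻¹' Iio (-M) = Ioi M := by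
    ext x; simp only [Set.mem_preimage, Set.mem_Iio, Set.mem_Ioi, neg_lt_neg_iff]
  have h1 : Measure.map Neg.neg ((volume : Measure ℝ).restrict (Ioi M)) =
      (volume : Measure ℝ).restrict (Iio (-M)) := by
    rw [← hpre, ← Measure.restrict_map measurable_neg measurableSet_Iio,
      Measure.map_neg_eq_self]
  rw [← h1, lintegral_map hg measurable_neg]

lemma aux_lintegral_outside {M : ℝ} (hM : 0 < M) (g : ℝ → ℝ≥0∞) (hg : Measurable g)
    {C : ℝ} (hC : 0 ≤ C) (hbound : ∀ x : ℝ, M ≤ |x| → g x ≤ ENNReal.ofReal (C / x ^ 2)) :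
    ∫⁻ x in {x : ℝ | M < |x|}, g x ≤ ENNReal.ofReal (2 * C / M) := by
  have hset : {x : ℝ | M < |x|} = Iio (-M) ∪ Ioi M := by
    ext x
    simp only [Set.mem_setOf_eq, Set.mem_union, Set.mem_Iio, Set.mem_Ioi, lt_abs]
    constructor
    · rintro (h | h)
      · exact Or.inr h
      · exact Or.inl (by linarith)
    · rintro (h | h)
      · exact Or.inr (by linarith)
      · exact Or.inl h
  have hIoi : ∫⁻ x in Ioi M, g x ≤ ENNReal.ofReal (C / M) := by
    calc (∫⁻ x in Ioi M, g x) ≤ ∫⁻ x in Ioi M, ENNReal.ofReal (C / x ^ 2) := by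
          refine setLIntegral_mono (by fun_prop) (fun x hx => hbound x ?_)
          rw [abs_of_pos (hM.trans hx)]; exact le_of_lt hx
      _ = ENNReal.ofReal (C / M) := by
          rw [← ofReal_integral_eq_lintegral_ofReal]
          · congr 1
            simp_rw [div_eq_mul_one_div C]
            rw [integral_const_mul, aux_integral_inv_sq hM]
          · exact (IntegrableOn.congr_fun ((aux_integrableOn_inv_sq hM).const_mul C)
              (fun x _ => mul_one_div C _) measurableSet_Ioi)
          · filter_upwards [ae_restrict_mem measurableSet_Ioi] with x hx
            positivity
  have hIio : ∫⁻ x in Iio (-M), g x ≤ ENNReal.ofReal (C / M) := by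
    rw [aux_lintegral_Iio_neg M g hg]
    calc (∫⁻ x in Ioi M, g (-x)) ≤ ∫⁻ x in Ioi M, ENNReal.ofReal (C / x ^ 2) := by
          refine setLIntegral_mono (by fun_prop) (fun x hx => ?_)
          have := hbound (-x) (by rw [abs_neg, abs_of_pos (hM.trans hx)]; exact le_of_lt hx)
          simpa using this
      _ ≤ ENNReal.ofReal (C / M) := by
          rw [← ofReal_integral_eq_lintegral_ofReal]
          · rw [show (∫ x in Ioi M, C / x ^ 2) = C / M by
              simp_rw [div_eq_mul_one_div C]
              rw [integral_const_mul, aux_integral_inv_sq hM]]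
          · exact (IntegrableOn.congr_fun ((aux_integrableOn_inv_sq hM).const_mul C)
              (fun x _ => mul_one_div C _) measurableSet_Ioi)
          · filter_upwards [ae_restrict_mem measurableSet_Ioi] with x hx
            positivity
  calc (∫⁻ x in {x : ℝ | M < |x|}, g x)
      = ∫⁻ x in Iio (-M) ∪ Ioi M, g x := by rw [hset]
    _ ≤ (∫⁻ x in Iio (-M), g x) + ∫⁻ x in Ioi M, g x := lintegral_union_le _ _ _
    _ ≤ ENNReal.ofReal (C / M) + ENNReal.ofReal (C / M) := add_le_add hIio hIoi
    _ = ENNReal.ofReal (2 * C / M) := by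
        rw [← ENNReal.ofReal_add (by positivity) (by positivity)]
        ring_nf

/-- The standard Cauchy distribution on ℝ, with density `1/(π(1+x²))`. -/
noncomputable def stdCauchy : Measure ℝ :=
  MeasureTheory.volume.withDensity fun x => ENNReal.ofReal (1 / (Real.pi * (1 + x ^ 2)))

lemma aux_density_meas :
    Measurable fun x : ℝ => ENNReal.ofReal (1 / (Real.pi * (1 + x ^ 2))) := by
  fun_prop

lemma aux_set_meas (M : ℝ) : MeasurableSet {x : ℝ | M < |x|} :=
  measurableSet_lt measurable_const measurable_id.abs

lemma stdCauchy_tail {M : ℝ} (hM : 0 < M) :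
    stdCauchy {x : ℝ | M < |x|} ≤ ENNReal.ofReal (2 * (1 / Real.pi) / M) := by
  rw [stdCauchy, withDensity_apply _ (aux_set_meas M)]
  refine aux_lintegral_outside hM _ aux_density_meas (by positivity) (fun x hx => ?_)
  apply ENNReal.ofReal_le_ofReal
  have hx2 : (0:ℝ) < x ^ 2 := by
    have : x ≠ 0 := by intro h; rw [h] at hx; simp at hx; linarith
    positivity
  rw [div_div, one_div, one_div]
  apply inv_anti₀ (by positivity)
  nlinarith [Real.pi_pos]

lemma stdCauchy_trunc {M : ℝ} (hM : 3 ≤ M) :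
    (∫⁻ x, ENNReal.ofReal (min |x| M) ∂stdCauchy)
      ≤ ENNReal.ofReal ((2 * Real.log M + 2 + 1 / 9) / Real.pi) := by
  have hM0 : (0:ℝ) < M := by linarith
  have hg : Measurable fun x : ℝ => ENNReal.ofReal (min |x| M) := by fun_prop
  rw [stdCauchy, lintegral_withDensity_eq_lintegral_mul _ aux_density_meas hg]
  set φ : ℝ → ℝ := fun x => min |x| M / (Real.pi * (1 + x ^ 2)) with hφ
  have hpoint : ∀ x : ℝ, (ENNReal.ofReal (1 / (Real.pi * (1 + x ^ 2)))
      * ENNReal.ofReal (min |x| M)) = ENNReal.ofReal (φ x) := by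
    intro x
    rw [← ENNReal.ofReal_mul (by positivity)]
    congr 1
    rw [hφ]
    field_simp
  have hmeasφ : Measurable fun x => ENNReal.ofReal (φ x) := by
    apply Measurable.ennreal_ofReal
    apply Measurable.div
    · exact measurable_id.abs.min measurable_const
    · fun_prop
  calc (∫⁻ x, (fun y => ENNReal.ofReal (1 / (Real.pi * (1 + y ^ 2)))
          * ENNReal.ofReal (min |y| M)) x)
      = ∫⁻ x, ENNReal.ofReal (φ x) := by
        apply lintegral_congr
        intro x
        exact hpoint x
    _ = (∫⁻ x in {x : ℝ | M < |x|}, ENNReal.ofReal (φ x))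
        + ∫⁻ x in {x : ℝ | M < |x|}ᶜ, ENNReal.ofReal (φ x) :=
        (lintegral_add_compl _ (aux_set_meas M)).symm
    _ ≤ ENNReal.ofReal (2 / Real.pi) + ENNReal.ofReal (Real.log (1 + M ^ 2) / Real.pi) := by
        gcongr
        · -- outside piece
          have h1 : (∫⁻ x in {x : ℝ | M < |x|}, ENNReal.ofReal (φ x))
              ≤ ENNReal.ofReal (2 * (M / Real.pi) / M) := by
            refine aux_lintegral_outside hM0 _ hmeasφ (by positivity) (fun x hx => ?_)
            apply ENNReal.ofReal_le_ofReal
            have hx2 : (0:ℝ) < x ^ 2 := by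
              have : x ≠ 0 := by intro h; rw [h] at hx; simp at hx; linarith
              positivity
            rw [hφ, div_div]
            apply div_le_div₀ (by positivity) (min_le_right _ _) (by positivity)
            nlinarith [Real.pi_pos]
          refine h1.trans (le_of_eq ?_)
          congr 1
          field_simp
        · -- inside piece
          have hcompl : {x : ℝ | M < |x|}ᶜ = Icc (-M) M := by
            ext x
            simp only [Set.mem_compl_iff, Set.mem_setOf_eq, not_lt, Set.mem_Icc, abs_le]
          rw [hcompl]
          have hk : ∀ x ∈ Icc (-M) M, φ x ≤ |x| / (Real.pi * (1 + x ^ 2)) := by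
            intro x _
            rw [hφ]
            exact (div_le_div_iff_of_pos_right (by positivity)).mpr (min_le_left _ _)
          set k : ℝ → ℝ := fun x => |x| / (Real.pi * (1 + x ^ 2)) with hkdef
          have hkcont : Continuous k :=
            continuous_abs.div (by continuity) (fun x => by positivity)
          have hknn : ∀ x, 0 ≤ k x := fun x => by rw [hkdef]; positivity
          have hint : IntegrableOn k (Icc (-M) M) := hkcont.integrableOn_Icc
          have hval : ∫ x in Icc (-M) M, k x = Real.log (1 + M ^ 2) / Real.pi := by
            have hIcc : ∫ x in Icc (-M) M, k x = ∫ x in (-M)..M, k x := by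
              rw [MeasureTheory.integral_Icc_eq_integral_Ioc,
                ← intervalIntegral.integral_of_le (by linarith : -M ≤ M)]
            have hright : ∫ x in (0:ℝ)..M, k x = Real.log (1 + M ^ 2) / 2 / Real.pi := by
              have : ∫ x in (0:ℝ)..M, k x = ∫ x in (0:ℝ)..M, (x / (1 + x ^ 2)) / Real.pi := by
                apply intervalIntegral.integral_congr
                intro x hx
                rw [Set.uIcc_of_le (by linarith : (0:ℝ) ≤ M)] at hx
                show |x| / (Real.pi * (1 + x ^ 2)) = x / (1 + x ^ 2) / Real.pi
                rw [abs_of_nonneg hx.1, div_div, mul_comm]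
              rw [this, intervalIntegral.integral_div, aux_int_log]
            have hleft : ∫ x in (-M)..(0:ℝ), k x = ∫ x in (0:ℝ)..M, k x := by
              have heven : ∀ x : ℝ, k (-x) = k x := by
                intro x; rw [hkdef]; simp only [abs_neg, neg_sq]
              calc ∫ x in (-M)..(0:ℝ), k x
                  = ∫ x in (-M)..(0:ℝ), k (-x) :=
                    intervalIntegral.integral_congr (fun x _ => (heven x).symm)
                _ = ∫ x in (-(0:ℝ))..(-(-M)), k x := intervalIntegral.integral_comp_neg k
                _ = ∫ x in (0:ℝ)..M, k x := by norm_num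
            have hsplit : (∫ x in (-M)..(0:ℝ), k x) + ∫ x in (0:ℝ)..M, k x
                = ∫ x in (-M)..M, k x :=
              intervalIntegral.integral_add_adjacent_intervals
                (hkcont.intervalIntegrable _ _) (hkcont.intervalIntegrable _ _)
            rw [hIcc, ← hsplit, hleft, hright]
            have hpi := Real.pi_ne_zero
            field_simp
            ring
          calc (∫⁻ x in Icc (-M) M, ENNReal.ofReal (φ x))
              ≤ ∫⁻ x in Icc (-M) M, ENNReal.ofReal (k x) :=
                setLIntegral_mono (hkcont.measurable.ennreal_ofReal)
                  (fun x hx => ENNReal.ofReal_le_ofReal (hk x hx))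
            _ = ENNReal.ofReal (∫ x in Icc (-M) M, k x) :=
                (ofReal_integral_eq_lintegral_ofReal hint
                  (Filter.Eventually.of_forall (fun x => hknn x))).symm
            _ = ENNReal.ofReal (Real.log (1 + M ^ 2) / Real.pi) := by rw [hval]
    _ = ENNReal.ofReal ((2 + Real.log (1 + M ^ 2)) / Real.pi) := by
        rw [← ENNReal.ofReal_add (by positivity)
          (div_nonneg (Real.log_nonneg (by nlinarith)) Real.pi_pos.le), add_div]
    _ ≤ ENNReal.ofReal ((2 * Real.log M + 2 + 1 / 9) / Real.pi) := by
        apply ENNReal.ofReal_le_ofReal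
        have hlog : Real.log (1 + M ^ 2) ≤ 2 * Real.log M + 1 / 9 := by
          have h1 : (1 : ℝ) + M ^ 2 ≤ 10 / 9 * M ^ 2 := by nlinarith
          have h2 : Real.log (1 + M ^ 2) ≤ Real.log (10 / 9 * M ^ 2) :=
            Real.log_le_log (by positivity) h1
          have h3 : Real.log (10 / 9 * M ^ 2) = Real.log (10 / 9) + 2 * Real.log M := by
            rw [Real.log_mul (by norm_num) (by positivity), Real.log_pow]
            push_cast; ring
          have h4 : Real.log (10 / 9) ≤ 1 / 9 := by
            have := Real.log_le_sub_one_of_pos (show (0:ℝ) < 10/9 by norm_num)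
            linarith
          linarith
        have hpi := Real.pi_pos
        exact (div_le_div_iff_of_pos_right hpi).mpr (by linarith)

/-- Upper tail inequality for positive linear combinations of possibly dependent
standard Cauchy random variables: `Pr[∑ γ_i |X_i| > γ t] ≤ 2 log(n t) / t`. -/
theorem dependent_cauchy_upper_tail {Ω : Type*} {mΩ : MeasurableSpace Ω}
    (μ : Measure Ω) [IsProbabilityMeasure μ]
    (n : ℕ) (hn : 3 ≤ n)
    (X : Fin n → Ω → ℝ) (hlaw : ∀ i, Measure.map (X i) μ = stdCauchy)
    (γ : Fin n → ℝ) (hγ : ∀ i, 0 < γ i)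
    (t : ℝ) (ht : 1 ≤ t) :
    μ {ω | (∑ i, γ i) * t < ∑ i, γ i * |X i ω|} ≤
      ENNReal.ofReal (2 * Real.log (n * t) / t) := by
  have hn0 : (0:ℝ) < n := by positivity
  have hnR : (3:ℝ) ≤ n := by exact_mod_cast hn
  have ht0 : (0:ℝ) < t := by linarith
  set M : ℝ := n * t with hMdef
  have hM3 : 3 ≤ M := by nlinarith
  have hM0 : 0 < M := by linarith
  -- measurability of the X i
  have hXae : ∀ i, AEMeasurable (X i) μ := by
    intro i
    by_contra h
    have h0 := Measure.map_of_not_aemeasurable (μ := μ) (f := X i) h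
    rw [hlaw i] at h0
    have huniv : stdCauchy Set.univ = 0 := by rw [h0]; rfl
    rw [stdCauchy, withDensity_apply _ MeasurableSet.univ, Measure.restrict_univ,
      lintegral_eq_zero_iff aux_density_meas] at huniv
    haveI : (MeasureTheory.ae (volume : Measure ℝ)).NeBot := by
      rw [ae_neBot]
      intro hvol
      have := congrArg (fun m : Measure ℝ => m (Icc 0 1)) hvol
      simp [Real.volume_Icc] at this
    obtain ⟨x, hx⟩ := huniv.exists
    have : (0:ℝ) < 1 / (Real.pi * (1 + x ^ 2)) := by positivity
    simp only [Pi.zero_apply, ENNReal.ofReal_eq_zero] at hx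
    linarith
  -- tail bound for each coordinate
  have htail : ∀ i, μ {ω | M < |X i ω|} ≤ ENNReal.ofReal (2 * (1 / Real.pi) / M) := by
    intro i
    have hpre : μ {ω | M < |X i ω|} = stdCauchy {x : ℝ | M < |x|} := by
      rw [← hlaw i, Measure.map_apply_of_aemeasurable (hXae i) (aux_set_meas M)]
      rfl
    rw [hpre]
    exact stdCauchy_tail hM0
  -- truncated moment for each coordinate
  have hmom : ∀ i, (∫⁻ ω, ENNReal.ofReal (min |X i ω| M) ∂μ)
      ≤ ENNReal.ofReal ((2 * Real.log M + 2 + 1 / 9) / Real.pi) := by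
    intro i
    have hg : Measurable fun x : ℝ => ENNReal.ofReal (min |x| M) := by
      apply Measurable.ennreal_ofReal
      exact measurable_id.abs.min measurable_const
    have := lintegral_map' (hg.aemeasurable (μ := Measure.map (X i) μ)) (hXae i)
    rw [hlaw i] at this
    rw [← this]
    exact stdCauchy_trunc hM3
  haveI : Nonempty (Fin n) := ⟨⟨0, by omega⟩⟩
  set γs : ℝ := ∑ i, γ i with hγsdef
  have hγs0 : 0 < γs := Finset.sum_pos (fun i _ => hγ i) Finset.univ_nonempty
  set B₀ : ℝ := (2 * Real.log M + 2 + 1 / 9) / Real.pi with hB0def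
  have hL1 : 1 ≤ Real.log M := by
    rw [Real.le_log_iff_exp_le hM0]
    have := Real.exp_one_lt_d9
    linarith
  have hB0nn : 0 ≤ B₀ := by
    rw [hB0def]
    have := Real.pi_pos
    positivity
  set U : Set Ω := ⋃ i, {ω | M < |X i ω|} with hUdef
  set B : Set Ω := {ω | γs * t < ∑ i, γ i * min |X i ω| M} with hBdef
  have hsub : {ω | γs * t < ∑ i, γ i * |X i ω|} ⊆ U ∪ B := by
    intro ω hω
    by_cases hU : ω ∈ U
    · exact Or.inl hU
    · right
      rw [hUdef] at hU
      simp only [Set.mem_iUnion, Set.mem_setOf_eq, not_exists, not_lt] at hU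
      rw [hBdef, Set.mem_setOf_eq]
      have : ∀ i ∈ Finset.univ, γ i * min |X i ω| M = γ i * |X i ω| :=
        fun i _ => by rw [min_eq_left (hU i)]
      rw [Finset.sum_congr rfl this]
      exact hω
  -- union bound
  have hμU : μ U ≤ (n : ℝ≥0∞) * ENNReal.ofReal (2 * (1 / Real.pi) / M) := by
    refine (measure_iUnion_le _).trans ?_
    rw [tsum_fintype]
    calc (∑ i, μ {ω | M < |X i ω|})
        ≤ ∑ _i : Fin n, ENNReal.ofReal (2 * (1 / Real.pi) / M) :=
          Finset.sum_le_sum (fun i _ => htail i)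
      _ = (n : ℝ≥0∞) * ENNReal.ofReal (2 * (1 / Real.pi) / M) := by
          rw [Finset.sum_const, Finset.card_univ, Fintype.card_fin, nsmul_eq_mul]
  -- Markov bound
  have hμB : μ B ≤ ENNReal.ofReal (B₀ / t) := by
    set f : Ω → ℝ≥0∞ := fun ω => ∑ i, ENNReal.ofReal (γ i * min |X i ω| M) with hfdef
    have hterm : ∀ i, AEMeasurable (fun ω => γ i * min |X i ω| M) μ :=
      fun i => ((continuous_abs.measurable.comp_aemeasurable (hXae i)).min aemeasurable_const).const_mul (γ i)
    have hfae : AEMeasurable f μ :=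
      Finset.aemeasurable_fun_sum _ (fun i _ => (hterm i).ennreal_ofReal)
    have hBsub : B ⊆ {ω | ENNReal.ofReal (γs * t) ≤ f ω} := by
      intro ω hω
      rw [hBdef, Set.mem_setOf_eq] at hω
      have hfω : f ω = ENNReal.ofReal (∑ i, γ i * min |X i ω| M) :=
        (ENNReal.ofReal_sum_of_nonneg
          (fun i _ => mul_nonneg (hγ i).le (le_min (abs_nonneg _) hM0.le))).symm
      rw [Set.mem_setOf_eq, hfω]
      exact ENNReal.ofReal_le_ofReal hω.le
    have hmarkov := meas_ge_le_lintegral_div hfae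
      (ε := ENNReal.ofReal (γs * t))
      (ENNReal.ofReal_pos.mpr (by positivity)).ne' ENNReal.ofReal_ne_top
    have hlint : (∫⁻ ω, f ω ∂μ) ≤ ENNReal.ofReal (γs * B₀) := by
      rw [hfdef]
      calc (∫⁻ ω, ∑ i, ENNReal.ofReal (γ i * min |X i ω| M) ∂μ)
          = ∑ i, ∫⁻ ω, ENNReal.ofReal (γ i * min |X i ω| M) ∂μ :=
            lintegral_finset_sum' _ (fun i _ => (hterm i).ennreal_ofReal)
        _ ≤ ∑ i, ENNReal.ofReal (γ i) * ENNReal.ofReal B₀ := by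
            refine Finset.sum_le_sum (fun i _ => ?_)
            have heq : (∫⁻ ω, ENNReal.ofReal (γ i * min |X i ω| M) ∂μ)
                = ENNReal.ofReal (γ i) * ∫⁻ ω, ENNReal.ofReal (min |X i ω| M) ∂μ := by
              simp_rw [ENNReal.ofReal_mul (hγ i).le]
              exact lintegral_const_mul'' _ ((continuous_abs.measurable.comp_aemeasurable (hXae i)).min aemeasurable_const).ennreal_ofReal
            rw [heq]
            exact mul_le_mul_right (hmom i) _
        _ = ENNReal.ofReal (γs * B₀) := by
            have h1 : ∀ i ∈ Finset.univ, ENNReal.ofReal (γ i) * ENNReal.ofReal B₀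
                = ENNReal.ofReal (γ i * B₀) :=
              fun i _ => (ENNReal.ofReal_mul (hγ i).le).symm
            rw [Finset.sum_congr rfl h1,
              ← ENNReal.ofReal_sum_of_nonneg (fun i _ => mul_nonneg (hγ i).le hB0nn),
              ← Finset.sum_mul]
    calc μ B ≤ μ {ω | ENNReal.ofReal (γs * t) ≤ f ω} := measure_mono hBsub
      _ ≤ (∫⁻ ω, f ω ∂μ) / ENNReal.ofReal (γs * t) := hmarkov
      _ ≤ ENNReal.ofReal (γs * B₀) / ENNReal.ofReal (γs * t) :=
          ENNReal.div_le_div_right hlint _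
      _ = ENNReal.ofReal (γs * B₀ / (γs * t)) :=
          (ENNReal.ofReal_div_of_pos (by positivity)).symm
      _ = ENNReal.ofReal (B₀ / t) := by
          rw [mul_div_mul_left _ _ hγs0.ne']
  -- combine
  calc μ {ω | γs * t < ∑ i, γ i * |X i ω|}
      ≤ μ (U ∪ B) := measure_mono hsub
    _ ≤ μ U + μ B := measure_union_le _ _
    _ ≤ (n : ℝ≥0∞) * ENNReal.ofReal (2 * (1 / Real.pi) / M) + ENNReal.ofReal (B₀ / t) :=
        add_le_add hμU hμB
    _ = ENNReal.ofReal ((n : ℝ) * (2 * (1 / Real.pi) / M) + B₀ / t) := by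
        rw [← ENNReal.ofReal_natCast n, ← ENNReal.ofReal_mul (by positivity),
          ← ENNReal.ofReal_add (by positivity) (by positivity)]
    _ ≤ ENNReal.ofReal (2 * Real.log (n * t) / t) := by
        apply ENNReal.ofReal_le_ofReal
        have hπ : (3.141592:ℝ) ≤ Real.pi := by
          have := Real.pi_gt_d6
          linarith
        have hπ0 := Real.pi_pos
        have h1 : (n : ℝ) * (2 * (1 / Real.pi) / M) = (2 / Real.pi) / t := by
          rw [hMdef]
          field_simp
        rw [h1, hB0def, ← hMdef, ← add_div, div_le_div_iff₀ ht0 ht0]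
        have hcore : 2 / Real.pi + (2 * Real.log M + 2 + 1 / 9) / Real.pi
            ≤ 2 * Real.log M := by
          rw [← add_div, div_le_iff₀ hπ0]
          nlinarith [mul_nonneg (sub_nonneg.mpr hL1) (sub_nonneg.mpr hπ)]
        nlinarith [hcore]
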